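/- (Sufficient decrease for the Riemannian proximal gradient iteration.) Let $\mathcal{M}$ be a Riemannian manifold with retraction $R$, let $g: \mathcal{M} \to \mathbb{R}$, and let $f: \mathcal{M} \to \mathbb{R}$ be differentiable with the property that $f(R_x(\eta)) \le f(x) + \langle \mathrm{grad} f(x), \eta \rangle_x + \frac{L}{2}\|\eta\|_x^2$ for all $x$ in the sublevel set $\Omega_{x_0}$ and all relevant $\eta \in T_x\mathcal{M}$. Fix $\tilde L > L$, and at each iterate $x_k$ let $\eta_{x_k}^* \in T_{x_k}\mathcal{M}$ satisfy $\ell_{x_k}(\eta_{x_k}^*) \le \ell_{x_k}(0)$, where $\ell_{x_k}(\eta) = \langle \mathrm{grad} f(x_k), \eta \rangle_{x_k} + \frac{\tilde L}{2}\|\eta\|_{x_k}^2 + g(R_{x_k}(\eta))$, and set $x_{k+1} = R_{x_k}(\eta_{x_k}^*)$. Then $F(x_k) - F(x_{k+1}) \ge \frac{\tilde L - L}{2} \|\eta_{x_k}^*\|_{x_k}^2$, where $F = f + g$. -/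
import Mathlib


open scoped RealInnerProductSpace

/-- sufficient decrease of the Riemannian proximal gradient iteration:
if `f` is `L`-retraction-smooth on the sublevel set `Ω_{x₀} = {x | F x ≤ F x₀}`,
`L̃ > L`, each `η_k` satisfies `ℓ_{x_k}(η_k) ≤ ℓ_{x_k}(0)` and `x_{k+1} = R_{x_k}(η_k)`,
then `F(x_k) - F(x_{k+1}) ≥ (L̃ - L)/2 ⬝ ‖η_k‖²`. -/
theorem stmt4 (M : Type*) (T : M → Type*)
    [∀ x, NormedAddCommGroup (T x)] [∀ x, InnerProductSpace ℝ (T x)]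
    (R : (x : M) → T x → M) (hR0 : ∀ x : M, R x 0 = x)
    (f g : M → ℝ) (gradf : (x : M) → T x)
    (L Ltil : ℝ) (hL : L < Ltil)
    (x0 : M)
    (hsmooth : ∀ x : M, f x + g x ≤ f x0 + g x0 → ∀ η : T x,
      f (R x η) ≤ f x + ⟪gradf x, η⟫ + L / 2 * ‖η‖ ^ 2)
    (x : ℕ → M) (hx0 : x 0 = x0)
    (η : (k : ℕ) → T (x k))
    (hη : ∀ k, ⟪gradf (x k), η k⟫ + Ltil / 2 * ‖η k‖ ^ 2 + g (R (x k) (η k))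
        ≤ ⟪gradf (x k), (0 : T (x k))⟫ + Ltil / 2 * ‖(0 : T (x k))‖ ^ 2 + g (R (x k) 0))
    (hstep : ∀ k, x (k + 1) = R (x k) (η k)) :
    ∀ k, (Ltil - L) / 2 * ‖η k‖ ^ 2 ≤ (f (x k) + g (x k)) - (f (x (k + 1)) + g (x (k + 1))) := by
  -- key: if F(x k) ≤ F x0 then decrease at k
  have key : ∀ k, f (x k) + g (x k) ≤ f x0 + g x0 →
      (Ltil - L) / 2 * ‖η k‖ ^ 2 ≤ (f (x k) + g (x k)) - (f (x (k+1)) + g (x (k+1))) := by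
    intro k hk
    have h1 := hη k
    simp only [inner_zero_right, norm_zero, hR0] at h1
    have h2 := hsmooth (x k) hk (η k)
    rw [hstep k]
    nlinarith [h1, h2]
  have hsub : ∀ k, f (x k) + g (x k) ≤ f x0 + g x0 := by
    intro k
    induction k with
    | zero => rw [hx0]
    | succ n ih =>
      have := key n ih
      nlinarith [sq_nonneg (‖η n‖), hL]
  intro k
  exact key k (hsub k)
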